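/- Let d ≥ 1, let μ ∈ Xf be d-deep in C₀ and let s ∈ Wf. (i) If (ν, σ) ∈ Xf ⋊ Wf and the pair (s′, μ′ + η) := ^(ν,σ)(s, μ + η) satisfies 0 < ⟨μ′_j + η₀, α^∨⟩ < p for all j and positive coroots α^∨ (i.e. μ′ lies in C₀), then μ′ is (d−1)-deep in C₀ and t_ν σ ∈ Ωf (the dot-action stabilizer of C₀). (ii) Conversely, for every (ν, σ) with t_ν σ ∈ Ωf, the pair (s′, μ′ + η) := ^(ν,σ)(s, μ + η) satisfies that μ′ is (d−1)-deep in C₀. -/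

import Mathlib

/-!
Common setup: the extended affine Weyl group of `GL_n` (f-fold product), its dot
action on `(ℝ^n)^f`, p-alcoves, lengths, Bruhat orders (dominant and antidominant),
the up (↑) order, admissible sets, and the combinatorics of lowest alcove
presentations, following Le–Le Hung–Levin, "Weight elimination in Serre-type
conjectures".
-/

noncomputable section

namespace LLLSerre

open scoped BigOperators

/-- `η₀ = (n-1, n-2, …, 1, 0)`. -/
def eta0 (n : ℕ) : Fin n → ℤ := fun i => (n : ℤ) - 1 - (i : ℤ)

/-- The action of a permutation on a vector: `(σ x) i = x (σ⁻¹ i)`. -/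
def permAct {n : ℕ} {α : Type*} (σ : Equiv.Perm (Fin n)) (x : Fin n → α) : Fin n → α :=
  fun i => x (σ⁻¹ i)

/-- The weight lattice `Xf = (ℤ^n)^f`. -/
abbrev Xf (n f : ℕ) := Fin f → Fin n → ℤ

/-- The f-fold product of Weyl groups `Wf = (S_n)^f`. -/
abbrev WfG (n f : ℕ) := Fin f → Equiv.Perm (Fin n)

/-- Points of `(ℝ^n)^f`. -/
abbrev RPt (n f : ℕ) := Fin f → Fin n → ℝ

/-- The extended affine Weyl group `Wtf = (X ⋊ W)^f`; the pair `(w, ν)` represents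
`w t_ν`. -/
structure Wtf (n f : ℕ) where
  w : WfG n f
  t : Xf n f

/-- Multiplication in `Wtf`: `(w₁ t_{ν₁})(w₂ t_{ν₂}) = w₁w₂ t_{ν₂ + w₂⁻¹(ν₁)}`. -/
def Wtf.mul {n f : ℕ} (a b : Wtf n f) : Wtf n f :=
  ⟨fun j => a.w j * b.w j, fun j => b.t j + permAct (b.w j)⁻¹ (a.t j)⟩

/-- Inversion in `Wtf`: `(w t_ν)⁻¹ = w⁻¹ t_{-w(ν)}`. -/
def Wtf.inv {n f : ℕ} (a : Wtf n f) : Wtf n f :=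
  ⟨fun j => (a.w j)⁻¹, fun j => -(permAct (a.w j) (a.t j))⟩

/-- Embedding of the finite Weyl group `Wf` in `Wtf`. -/
def ofW {n f : ℕ} (w : WfG n f) : Wtf n f := ⟨w, fun _ _ => 0⟩

/-- The translation `t_ν ∈ Wtf`. -/
def transl {n f : ℕ} (ν : Xf n f) : Wtf n f := ⟨fun _ => 1, ν⟩

/-- `η = (η₀, …, η₀) ∈ Xf`. -/
def etaf (n f : ℕ) : Xf n f := fun _ => eta0 n

/-- The longest element `w₀ ∈ Wf`. -/
def w0f (n f : ℕ) : WfG n f := fun _ => Fin.revPerm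

/-- `w₀` as an element of `Wtf`. -/
def w0Elt (n f : ℕ) : Wtf n f := ofW (w0f n f)

/-- `w̃_h = w₀ t_{-η} ∈ Wtf`. -/
def whElt (n f : ℕ) : Wtf n f := ⟨w0f n f, fun _ i => -(eta0 n i)⟩

/-- The dot action of `Wtf` on `(ℝ^n)^f`: `(w t_ν) · x = w(x + η + pν) − η`. -/
def dotR {n f : ℕ} (p : ℕ) (a : Wtf n f) (x : RPt n f) : RPt n f :=
  fun j i =>
    (x j ((a.w j)⁻¹ i) + ((eta0 n ((a.w j)⁻¹ i) : ℤ) : ℝ)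
      + (p : ℝ) * ((a.t j ((a.w j)⁻¹ i) : ℤ) : ℝ)) - ((eta0 n i : ℤ) : ℝ)

/-- The dot action of `Wtf` on integral weights. -/
def dotZ {n f : ℕ} (p : ℕ) (a : Wtf n f) (lam : Xf n f) : Xf n f :=
  fun j i =>
    (lam j ((a.w j)⁻¹ i) + eta0 n ((a.w j)⁻¹ i) + (p : ℤ) * a.t j ((a.w j)⁻¹ i)) - eta0 n i

/-- `⟨x_j + η₀, α_{ik}^∨⟩` for a real point `x`. -/
def prR {n f : ℕ} (x : RPt n f) (j : Fin f) (i k : Fin n) : ℝ :=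
  (x j i + ((eta0 n i : ℤ) : ℝ)) - (x j k + ((eta0 n k : ℤ) : ℝ))

/-- `⟨λ_j + η₀, α_{ik}^∨⟩` for a weight `λ`. -/
def prZ {n f : ℕ} (lam : Xf n f) (j : Fin f) (i k : Fin n) : ℤ :=
  (lam j i + eta0 n i) - (lam j k + eta0 n k)

/-- A point is (p-)regular if it lies on none of the affine hyperplanes
`⟨x_j + η₀, α^∨⟩ = pm`. -/
def regular {n f : ℕ} (p : ℕ) (x : RPt n f) : Prop :=
  ∀ (j : Fin f) (i k : Fin n) (m : ℤ), i < k → prR x j i k ≠ (p : ℝ) * (m : ℝ)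

/-- Two regular points lie in the same p-alcove (same side of every hyperplane). -/
def sameAlcove {n f : ℕ} (p : ℕ) (x y : RPt n f) : Prop :=
  regular p x ∧ regular p y ∧
    ∀ (j : Fin f) (i k : Fin n) (m : ℤ), i < k →
      (prR x j i k < (p : ℝ) * (m : ℝ) ↔ prR y j i k < (p : ℝ) * (m : ℝ))

/-- The root `α_{ik} = e_i - e_k` as a real vector. -/
def rootR {n : ℕ} (i k i' : Fin n) : ℝ :=
  (if i' = i then (1 : ℝ) else 0) - (if i' = k then (1 : ℝ) else 0)

/-- The affine reflection across the hyperplane `⟨x_j + η₀, α_{ik}^∨⟩ = pm`: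
it replaces `x_j` by `x_j − (⟨x_j + η₀, α_{ik}^∨⟩ − pm) α_{ik}`. -/
def reflPt {n f : ℕ} (p : ℕ) (j : Fin f) (i k : Fin n) (m : ℤ) (x : RPt n f) : RPt n f :=
  fun j' i' =>
    if j' = j then x j' i' - (prR x j i k - (p : ℝ) * (m : ℝ)) * rootR i k i' else x j' i'

/-- The origin, a point of the base alcove `C₀` (when `p > n`). -/
def basePt (n f : ℕ) : RPt n f := fun _ _ => 0

/-- The hyperplane indexed by `(j, i, k, m)` separates `x` from `y`. -/
def separates {n f : ℕ} (p : ℕ) (x y : RPt n f) (j : Fin f) (i k : Fin n) (m : ℤ) : Prop :=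
  (prR x j i k < (p : ℝ) * (m : ℝ) ∧ (p : ℝ) * (m : ℝ) < prR y j i k) ∨
  (prR y j i k < (p : ℝ) * (m : ℝ) ∧ (p : ℝ) * (m : ℝ) < prR x j i k)

/-- The length of `a ∈ Wtf` measured from the alcove of the base point `x`:
the number of hyperplanes separating the alcove of `x` from its image under `a`. -/
def lenFrom {n f : ℕ} (p : ℕ) (x : RPt n f) (a : Wtf n f) : ℕ :=
  Set.ncard {q : Fin f × Fin n × Fin n × ℤ |
    q.2.1 < q.2.2.1 ∧ separates p x (dotR p a x) q.1 q.2.1 q.2.2.1 q.2.2.2}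

/-- Length relative to the dominant base alcove `C₀`. -/
def len {n f : ℕ} (p : ℕ) (a : Wtf n f) : ℕ := lenFrom p (basePt n f) a

/-- A point of the antidominant base alcove `w₀ · C₀`. -/
def antiBasePt (n f p : ℕ) : RPt n f := dotR p (w0Elt n f) (basePt n f)

/-- Length relative to the antidominant base alcove `w₀ · C₀`. -/
def lenV {n f : ℕ} (p : ℕ) (a : Wtf n f) : ℕ := lenFrom p (antiBasePt n f p) a

/-- The affine Weyl group `Waf = (Λ_R ⋊ W)^f ⊆ Wtf`. -/
def Waf (n f : ℕ) : Set (Wtf n f) := {a | ∀ j, (∑ i, a.t j i) = 0}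

/-- The stabilizer `Ωf` of the dominant base alcove `C₀`. -/
def Omegaf (n f p : ℕ) : Set (Wtf n f) :=
  {a | sameAlcove p (basePt n f) (dotR p a (basePt n f))}

/-- The stabilizer of the antidominant base alcove `w₀ · C₀`. -/
def OmegaV (n f p : ℕ) : Set (Wtf n f) :=
  {a | sameAlcove p (antiBasePt n f p) (dotR p a (antiBasePt n f p))}

/-- `a ∈ Wtf` acts via the dot action as the affine reflection in a single hyperplane. -/
def isRefl {n f : ℕ} (p : ℕ) (a : Wtf n f) : Prop :=
  ∃ (j : Fin f) (i k : Fin n) (m : ℤ), i < k ∧ ∀ x, dotR p a x = reflPt p j i k m x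

/-- One step of the Bruhat order (relative to the base point `x`):
`u < r u` for `r` a reflection with `ℓ(u) < ℓ(r u)`. -/
def bruhatStepFrom {n f : ℕ} (p : ℕ) (x : RPt n f) (u v : Wtf n f) : Prop :=
  ∃ r, isRefl p r ∧ v = Wtf.mul r u ∧ lenFrom p x u < lenFrom p x v

/-- The Bruhat order on `Wtf` relative to the base alcove with representative
point `x` and stabilizer `Ω`: on `Waf` it is generated by the reflection steps,
and is extended to `Wtf` by `u ω ≤ v ω` for `u ≤ v` in `Waf`, `ω ∈ Ω`. -/
def bruhatLEFrom {n f : ℕ} (p : ℕ) (x : RPt n f) (Om : Set (Wtf n f)) (a b : Wtf n f) : Prop :=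
  ∃ u v ω, u ∈ Waf n f ∧ v ∈ Waf n f ∧ ω ∈ Om ∧
    a = Wtf.mul u ω ∧ b = Wtf.mul v ω ∧
    Relation.ReflTransGen (bruhatStepFrom p x) u v

/-- The Bruhat order on `Wtf` relative to the dominant base alcove. -/
def bruhatLE {n f : ℕ} (p : ℕ) (a b : Wtf n f) : Prop :=
  bruhatLEFrom p (basePt n f) (Omegaf n f p) a b

/-- The Bruhat order on `Wtf` relative to the antidominant base alcove. -/
def bruhatLEV {n f : ℕ} (p : ℕ) (a b : Wtf n f) : Prop :=
  bruhatLEFrom p (antiBasePt n f p) (OmegaV n f p) a b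

/-- The admissible set `Adm(λ) = {w̃ : w̃ ≤ t_{σ(λ)} for some σ ∈ Wf}` (dominant order). -/
def Adm {n f : ℕ} (p : ℕ) (lam : Xf n f) : Set (Wtf n f) :=
  {a | ∃ σ : WfG n f, bruhatLE p a (transl (fun j => permAct (σ j) (lam j)))}

/-- The admissible set `Adm∨(λ)` (antidominant order). -/
def AdmV {n f : ℕ} (p : ℕ) (lam : Xf n f) : Set (Wtf n f) :=
  {a | ∃ σ : WfG n f, bruhatLEV p a (transl (fun j => permAct (σ j) (lam j)))}

/-- The anti-automorphism `w̃ = w t_ν ↦ w̃* = t_{ν*} w*` of `Wtf`, where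
`(w*)_j = (w_{f-1-j})⁻¹` and `(ν*)_j = ν_{f-1-j}`. -/
def wstar {n f : ℕ} (a : Wtf n f) : Wtf n f :=
  ⟨fun j => (a.w (Fin.rev j))⁻¹, fun j => permAct (a.w (Fin.rev j)) (a.t (Fin.rev j))⟩

/-- `ν ↦ ν*` on weights: `(ν*)_j = ν_{f-1-j}`. -/
def xstar {n f : ℕ} (lam : Xf n f) : Xf n f := fun j => lam (Fin.rev j)

/-- The cyclic shift `π` on weights: `(πν)_j = ν_{j-1}`. -/
def sh {n f : ℕ} (ν : Xf n f) : Xf n f := fun j => ν ((finRotate f)⁻¹ j)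

/-- The cyclic shift `π` on `Wf`: `(πσ)_j = σ_{j-1}`. -/
def shW {n f : ℕ} (σ : WfG n f) : WfG n f := fun j => σ ((finRotate f)⁻¹ j)

/-- The `Wf`-part of `^(ν,σ)(w, μ)`, namely `σ w π(σ)⁻¹`. -/
def conjW {n f : ℕ} (σ w : WfG n f) : WfG n f := fun j => σ j * w j * (shW σ j)⁻¹

/-- The `Xf`-part of `^(ν,σ)(w, μ)`, namely `σ(μ) + pν − σwπ(σ)⁻¹ π(ν)`. -/
def conjX {n f : ℕ} (p : ℕ) (ν : Xf n f) (σ w : WfG n f) (μ : Xf n f) : Xf n f :=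
  fun j i => permAct (σ j) (μ j) i + (p : ℤ) * ν j i - permAct (conjW σ w j) (sh ν j) i

/-- `(w, μ) ∼ (w', μ')`: `(w', μ') = ^(ν,σ)(w, μ)` for some `(ν, σ)`. -/
def pairEquiv {n f : ℕ} (p : ℕ) (w : WfG n f) (μ : Xf n f) (w' : WfG n f) (μ' : Xf n f) : Prop :=
  ∃ (ν : Xf n f) (σ : WfG n f), w' = conjW σ w ∧ μ' = conjX p ν σ w μ

/-- `λ` is m-deep in the base alcove `C₀`:
`m < ⟨λ_j + η₀, α^∨⟩ < p − m` for all `j` and positive coroots `α^∨`. -/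
def deep {n f : ℕ} (p m : ℕ) (lam : Xf n f) : Prop :=
  ∀ (j : Fin f) (i k : Fin n), i < k →
    (m : ℤ) < prZ lam j i k ∧ prZ lam j i k < (p : ℤ) - (m : ℤ)

/-- `λ` lies m-deep in its own p-alcove. -/
def deepInAlcove {n f : ℕ} (p m : ℕ) (lam : Xf n f) : Prop :=
  ∀ (j : Fin f) (i k : Fin n), i < k →
    ∃ N : ℤ, (p : ℤ) * N + (m : ℤ) < prZ lam j i k ∧
      prZ lam j i k < (p : ℤ) * (N + 1) - (m : ℤ)

/-- The p-restricted weights `X₁`. -/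
def X1 (n f p : ℕ) : Set (Xf n f) :=
  {lam | ∀ (j : Fin f) (i : Fin n) (h : (i : ℕ) + 1 < n),
    0 ≤ lam j i - lam j ⟨(i : ℕ) + 1, h⟩ ∧ lam j i - lam j ⟨(i : ℕ) + 1, h⟩ ≤ (p : ℤ) - 1}

/-- `X⁰`: weights pairing to 0 with every coroot. -/
def X0 (n f : ℕ) : Set (Xf n f) := {lam | ∀ (j : Fin f) (i k : Fin n), lam j i = lam j k}

/-- The alcove of the regular point `x` is dominant. -/
def dominantPt {n f : ℕ} (x : RPt n f) : Prop :=
  ∀ (j : Fin f) (i k : Fin n), i < k → 0 < prR x j i k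

/-- The alcove of the regular point `x` is p-restricted. -/
def restrictedPt {n f : ℕ} (p : ℕ) (x : RPt n f) : Prop :=
  ∀ (j : Fin f) (i : Fin n) (h : (i : ℕ) + 1 < n),
    0 < prR x j i ⟨(i : ℕ) + 1, h⟩ ∧ prR x j i ⟨(i : ℕ) + 1, h⟩ < (p : ℝ)

/-- `Wtf⁺`: the elements sending `C₀` to a dominant alcove under the dot action. -/
def WtfPlus (n f p : ℕ) : Set (Wtf n f) := {a | dominantPt (dotR p a (basePt n f))}

/-- One step of the up (↑) order on alcoves, via representative points:
stay in the same alcove, or apply a reflection across a hyperplane lying above. -/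
def upStep {n f : ℕ} (p : ℕ) (x y : RPt n f) : Prop :=
  sameAlcove p x y ∨
    ∃ (j : Fin f) (i k : Fin n) (m : ℤ), i < k ∧ prR x j i k < (p : ℝ) * (m : ℝ) ∧
      y = reflPt p j i k m x

/-- The up (↑) order on p-alcoves, via representative points. -/
def alcoveLE {n f : ℕ} (p : ℕ) (x y : RPt n f) : Prop :=
  Relation.ReflTransGen (upStep p) x y

/-- `w̃₁ ↑ w̃₂` on `Wtf`: `w̃₁ · C₀ ↑ w̃₂ · C₀` and `w̃₁, w̃₂` in the same right
`Waf`-coset. -/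
def upOrd {n f : ℕ} (p : ℕ) (a b : Wtf n f) : Prop :=
  alcoveLE p (dotR p a (basePt n f)) (dotR p b (basePt n f)) ∧
    Wtf.mul a (Wtf.inv b) ∈ Waf n f

/-- Realification of an integral weight. -/
def toR {n f : ℕ} (lam : Xf n f) : RPt n f := fun j i => ((lam j i : ℤ) : ℝ)

/-- The `Wf`-orbit of a point of `(ℝ^n)^f`. -/
def orbitR {n f : ℕ} (y : RPt n f) : Set (RPt n f) :=
  Set.range fun σ : WfG n f => fun j => permAct (σ j) (y j)

end LLLSerre

namespace LLLSerre

/-! ### Auxiliary lemmas for Statement 5 -/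

private lemma perm_apply_inv_self' {n : ℕ} (e : Equiv.Perm (Fin n)) (x : Fin n) : e (e⁻¹ x) = x :=
  e.apply_symm_apply x

private lemma perm_inv_apply_self' {n : ℕ} (e : Equiv.Perm (Fin n)) (x : Fin n) : e⁻¹ (e x) = x :=
  e.symm_apply_apply x

private lemma eta0_sub' {n : ℕ} (x y : Fin n) :
    eta0 n x - eta0 n y = (y : ℤ) - (x : ℤ) := by
  simp only [eta0]; ring

private lemma prZ_anti' {n f : ℕ} (lam : Xf n f) (j : Fin f) (x y : Fin n) :
    prZ lam j y x = - prZ lam j x y := by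
  simp only [prZ]; ring

/-- The combinatorial defect function `g`. -/
def gfun {n f : ℕ} (ν : Xf n f) (σ : WfG n f) (j : Fin f) (x y : Fin n) : ℤ :=
  ν j (σ j x) - ν j (σ j y) - (if y < x then 1 else 0) + (if σ j y < σ j x then 1 else 0)

lemma gfun_anti {n f : ℕ} (ν : Xf n f) (σ : WfG n f) (j : Fin f) {x y : Fin n} (h : x ≠ y) :
    gfun ν σ j y x = - gfun ν σ j x y := by
  have h1 : σ j x ≠ σ j y := fun hc => h (Equiv.injective _ hc)
  rcases lt_or_gt_of_ne h with h2 | h2 <;> rcases lt_or_gt_of_ne h1 with h3 | h3 <;>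
    simp only [gfun, if_pos h2, if_pos h3, if_neg (not_lt.mpr h2.le), if_neg (not_lt.mpr h3.le)] <;>
    ring

private lemma real_cast_lt' (p : ℕ) (A m : ℤ) :
    ((A : ℝ) < (p : ℝ) * (m : ℝ)) ↔ A < (p : ℤ) * m := by
  rw [show (p : ℝ) * (m : ℝ) = (((p : ℤ) * m : ℤ) : ℝ) by push_cast; ring]
  exact Int.cast_lt

private lemma real_cast_ne' (p : ℕ) (A m : ℤ) :
    ((A : ℝ) ≠ (p : ℝ) * (m : ℝ)) ↔ A ≠ (p : ℤ) * m := by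
  rw [show (p : ℝ) * (m : ℝ) = (((p : ℤ) * m : ℤ) : ℝ) by push_cast; ring]
  exact Int.cast_injective.ne_iff

private lemma int_lt_mul_iff {p A : ℤ} (h0 : 0 < A) (hp : A < p) (m : ℤ) :
    A < p * m ↔ 1 ≤ m := by
  constructor
  · intro h
    by_contra hm
    push_neg at hm
    have hm' : m ≤ 0 := by omega
    nlinarith
  · intro hm
    nlinarith

private lemma int_ne_mul {p A : ℤ} (h0 : 0 < A) (hp : A < p) (m : ℤ) : A ≠ p * m := by
  intro h
  rcases le_or_gt m 0 with hm | hm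
  · nlinarith
  · have : 1 ≤ m := hm
    nlinarith

private lemma t_eq_zero' {p A t : ℤ} (h0 : 0 < A) (hp : A < p)
    (h1 : 0 < A + p * t) (h2 : A + p * t < p) : t = 0 := by
  rcases lt_trichotomy t 0 with h | h | h
  · have : t ≤ -1 := by omega
    nlinarith
  · exact h
  · have : 1 ≤ t := h
    nlinarith

/-- The pairing of the image of the base point with a coroot. -/
def Efun {n f : ℕ} (p : ℕ) (ν : Xf n f) (σ : WfG n f) (j : Fin f) (i k : Fin n) : ℤ :=
  eta0 n ((σ j)⁻¹ i) - eta0 n ((σ j)⁻¹ k) + (p : ℤ) * (ν j i - ν j k)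

private lemma prR_dot' {n f : ℕ} (p : ℕ) (ν : Xf n f) (σ : WfG n f) (j : Fin f) (i k : Fin n) :
    prR (dotR p (Wtf.mul (transl ν) (ofW σ)) (basePt n f)) j i k
      = ((Efun p ν σ j i k : ℤ) : ℝ) := by
  simp only [prR, dotR, Wtf.mul, transl, ofW, basePt, permAct, Efun, one_mul, inv_inv,
    perm_apply_inv_self', zero_add, Pi.add_apply]
  push_cast
  ring

private lemma prR_base' {n f : ℕ} (j : Fin f) (i k : Fin n) :
    prR (basePt n f) j i k = (((k : ℤ) - (i : ℤ) : ℤ) : ℝ) := by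
  have h : eta0 n i - eta0 n k = (k : ℤ) - (i : ℤ) := eta0_sub' i k
  simp only [prR, basePt, zero_add]
  rw [show ((eta0 n i : ℤ) : ℝ) - ((eta0 n k : ℤ) : ℝ) = ((eta0 n i - eta0 n k : ℤ) : ℝ) by
    push_cast; ring, h]

lemma mem_omega_iff' {n f : ℕ} {p : ℕ} (hnp : n < p) (ν : Xf n f) (σ : WfG n f) :
    Wtf.mul (transl ν) (ofW σ) ∈ Omegaf n f p ↔
      ∀ (j : Fin f) (i k : Fin n), i < k →
        0 < Efun p ν σ j i k ∧ Efun p ν σ j i k < p := by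
  have hbase : ∀ (i k : Fin n), i < k →
      (0 : ℤ) < (k : ℤ) - (i : ℤ) ∧ (k : ℤ) - (i : ℤ) < p := by
    intro i k hik
    have h1 : (i : ℕ) < (k : ℕ) := hik
    have h2 : (k : ℕ) < n := k.isLt
    omega
  constructor
  · intro h j i k hik
    obtain ⟨hreg1, hreg2, hiff⟩ := h
    obtain ⟨hb0, hbp⟩ := hbase i k hik
    have h1 := hiff j i k 1 hik
    rw [prR_base', prR_dot', real_cast_lt', real_cast_lt'] at h1
    have hlt : Efun p ν σ j i k < p := by
      have := h1.mp (by omega)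
      omega
    have h0 := hiff j i k 0 hik
    rw [prR_base', prR_dot', real_cast_lt', real_cast_lt'] at h0
    have hge : ¬ Efun p ν σ j i k < 0 := by
      intro hc
      have := h0.mpr (by omega)
      omega
    have hne := hreg2 j i k 0 hik
    rw [prR_dot', real_cast_ne'] at hne
    constructor
    · omega
    · exact hlt
  · intro h
    refine ⟨?_, ?_, ?_⟩
    · intro j i k m hik
      rw [prR_base', real_cast_ne']
      obtain ⟨hb0, hbp⟩ := hbase i k hik
      exact int_ne_mul hb0 hbp m
    · intro j i k m hik
      rw [prR_dot', real_cast_ne']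
      obtain ⟨h0, hp'⟩ := h j i k hik
      exact int_ne_mul h0 hp' m
    · intro j i k m hik
      rw [prR_base', prR_dot', real_cast_lt', real_cast_lt']
      obtain ⟨hb0, hbp⟩ := hbase i k hik
      obtain ⟨h0, hp'⟩ := h j i k hik
      rw [int_lt_mul_iff hb0 hbp, int_lt_mul_iff h0 hp']

lemma g_of_E {n f p : ℕ} (hnp : n < p) {ν : Xf n f} {σ : WfG n f}
    (hE : ∀ (j : Fin f) (i k : Fin n), i < k →
      0 < Efun p ν σ j i k ∧ Efun p ν σ j i k < p) :
    ∀ (j : Fin f) (x y : Fin n), x ≠ y → gfun ν σ j x y = 0 := by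
  intro j x y hxy
  have hσ : σ j x ≠ σ j y := fun hc => hxy (Equiv.injective _ hc)
  have hxn : (x : ℕ) < n := x.isLt
  have hyn : (y : ℕ) < n := y.isLt
  rcases lt_or_gt_of_ne hσ with h3 | h3
  · obtain ⟨hE0, hEp⟩ := hE j (σ j x) (σ j y) h3
    simp only [Efun, perm_inv_apply_self', eta0_sub'] at hE0 hEp
    rcases lt_or_gt_of_ne hxy with h2 | h2
    · have hxy' : (x : ℕ) < (y : ℕ) := h2
      have ht : ν j (σ j x) - ν j (σ j y) = 0 :=
        t_eq_zero' (p := (p : ℤ)) (A := (y : ℤ) - (x : ℤ)) (by omega) (by omega) hE0 hEp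
      simp only [gfun, if_neg (not_lt.mpr h2.le), if_neg (not_lt.mpr h3.le)]
      omega
    · have hxy' : (y : ℕ) < (x : ℕ) := h2
      have hre : (y : ℤ) - (x : ℤ) + (p : ℤ)
            + (p : ℤ) * ((ν j (σ j x) - ν j (σ j y)) - 1)
          = (y : ℤ) - (x : ℤ) + (p : ℤ) * (ν j (σ j x) - ν j (σ j y)) := by ring
      have ht : ν j (σ j x) - ν j (σ j y) - 1 = 0 :=
        t_eq_zero' (p := (p : ℤ)) (A := (y : ℤ) - (x : ℤ) + (p : ℤ)) (by omega) (by omega)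
          (by linarith [hE0, hre]) (by linarith [hEp, hre])
      simp only [gfun, if_pos h2, if_neg (not_lt.mpr h3.le)]
      omega
  · obtain ⟨hE0, hEp⟩ := hE j (σ j y) (σ j x) h3
    simp only [Efun, perm_inv_apply_self', eta0_sub'] at hE0 hEp
    rcases lt_or_gt_of_ne hxy with h2 | h2
    · have hxy' : (x : ℕ) < (y : ℕ) := h2
      have hre : (x : ℤ) - (y : ℤ) + (p : ℤ)
            + (p : ℤ) * ((ν j (σ j y) - ν j (σ j x)) - 1)
          = (x : ℤ) - (y : ℤ) + (p : ℤ) * (ν j (σ j y) - ν j (σ j x)) := by ring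
      have ht : ν j (σ j y) - ν j (σ j x) - 1 = 0 :=
        t_eq_zero' (p := (p : ℤ)) (A := (x : ℤ) - (y : ℤ) + (p : ℤ)) (by omega) (by omega)
          (by linarith [hE0, hre]) (by linarith [hEp, hre])
      simp only [gfun, if_neg (not_lt.mpr h2.le), if_pos h3]
      omega
    · have hxy' : (y : ℕ) < (x : ℕ) := h2
      have ht : ν j (σ j y) - ν j (σ j x) = 0 :=
        t_eq_zero' (p := (p : ℤ)) (A := (x : ℤ) - (y : ℤ)) (by omega) (by omega) hE0 hEp
      simp only [gfun, if_pos h2, if_pos h3]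
      omega

lemma E_of_g {n f p : ℕ} (hnp : n < p) {ν : Xf n f} {σ : WfG n f}
    (hg : ∀ (j : Fin f) (x y : Fin n), x ≠ y → gfun ν σ j x y = 0) :
    ∀ (j : Fin f) (i k : Fin n), i < k →
      0 < Efun p ν σ j i k ∧ Efun p ν σ j i k < p := by
  intro j i k hik
  have hik' : i ≠ k := ne_of_lt hik
  set a := (σ j)⁻¹ i with ha
  set b := (σ j)⁻¹ k with hb
  have hai : σ j a = i := by rw [ha]; exact perm_apply_inv_self' _ _
  have hbk : σ j b = k := by rw [hb]; exact perm_apply_inv_self' _ _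
  have hab : a ≠ b := fun hc => hik' (by rw [← hai, ← hbk, hc])
  have g1 := hg j a b hab
  simp only [gfun, hai, hbk, if_neg (not_lt.mpr hik.le)] at g1
  have hE : Efun p ν σ j i k
      = (b : ℤ) - (a : ℤ) + (p : ℤ) * (if b < a then 1 else 0) := by
    simp only [Efun, ← ha, ← hb, eta0_sub']
    have hv : ν j i - ν j k = (if b < a then 1 else 0) := by
      split_ifs at g1 ⊢ <;> omega
    rw [hv]
  rw [hE]
  have han : (a : ℕ) < n := a.isLt
  have hbn : (b : ℕ) < n := b.isLt
  have hab' : (a : ℕ) ≠ (b : ℕ) := fun hc => hab (Fin.ext hc)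
  split_ifs with hba
  · have : (b : ℕ) < (a : ℕ) := hba
    omega
  · have : ¬ (b : ℕ) < (a : ℕ) := hba
    omega

lemma prZ_conj {n f : ℕ} (p : ℕ) (ν : Xf n f) (σ s : WfG n f) (μ : Xf n f)
    (j : Fin f) (i k : Fin n) :
    prZ (conjX p ν σ s (μ + etaf n f) - etaf n f) j i k
      = prZ μ j ((σ j)⁻¹ i) ((σ j)⁻¹ k) + (p : ℤ) * (ν j i - ν j k)
        - (ν ((finRotate f)⁻¹ j) (σ ((finRotate f)⁻¹ j) ((s j)⁻¹ ((σ j)⁻¹ i)))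
           - ν ((finRotate f)⁻¹ j) (σ ((finRotate f)⁻¹ j) ((s j)⁻¹ ((σ j)⁻¹ k)))) := by
  simp only [prZ, conjX, conjW, shW, sh, permAct, etaf, Pi.add_apply, Pi.sub_apply,
    mul_inv_rev, inv_inv, Equiv.Perm.mul_apply]
  ring

lemma deep_of_g {n f p d : ℕ} (hd : 1 ≤ d) {μ ν : Xf n f} {σ : WfG n f} (s : WfG n f)
    (hμ : deep p d μ) (hg : ∀ (j : Fin f) (x y : Fin n), x ≠ y → gfun ν σ j x y = 0) :
    deep p (d - 1) (conjX p ν σ s (μ + etaf n f) - etaf n f) := by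
  intro j i k hik
  rw [prZ_conj]
  have hik' : i ≠ k := ne_of_lt hik
  set j' := (finRotate f)⁻¹ j with hj'
  set a := (σ j)⁻¹ i with ha
  set b := (σ j)⁻¹ k with hb
  have hai : σ j a = i := by rw [ha]; exact perm_apply_inv_self' _ _
  have hbk : σ j b = k := by rw [hb]; exact perm_apply_inv_self' _ _
  have hab : a ≠ b := fun hc => hik' (by rw [← hai, ← hbk, hc])
  have g1 := hg j a b hab
  simp only [gfun, hai, hbk, if_neg (not_lt.mpr hik.le)] at g1
  have huv : (s j)⁻¹ a ≠ (s j)⁻¹ b := fun hc => hab (Equiv.injective _ hc)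
  have g2 := hg j' _ _ huv
  simp only [gfun] at g2
  have i1 : (0:ℤ) ≤ (if (s j)⁻¹ b < (s j)⁻¹ a then (1:ℤ) else 0) ∧
      (if (s j)⁻¹ b < (s j)⁻¹ a then (1:ℤ) else 0) ≤ 1 := by split_ifs <;> norm_num
  have i2 : (0:ℤ) ≤ (if σ j' ((s j)⁻¹ b) < σ j' ((s j)⁻¹ a) then (1:ℤ) else 0) ∧
      (if σ j' ((s j)⁻¹ b) < σ j' ((s j)⁻¹ a) then (1:ℤ) else 0) ≤ 1 := by
    split_ifs <;> norm_num
  have hcast : ((d - 1 : ℕ) : ℤ) = (d : ℤ) - 1 := by omega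
  rw [hcast]
  rcases lt_or_gt_of_ne hab with h4 | h4
  · obtain ⟨hl, hr⟩ := hμ j a b h4
    rw [if_neg (not_lt.mpr h4.le)] at g1
    rw [show ν j i - ν j k = 0 by omega, mul_zero]
    constructor <;> linarith [g2, i1.1, i1.2, i2.1, i2.2]
  · obtain ⟨hl, hr⟩ := hμ j b a h4
    rw [if_pos h4] at g1
    rw [show ν j i - ν j k = 1 by omega, mul_one, prZ_anti' μ j b a]
    constructor <;> linarith [g2, i1.1, i1.2, i2.1, i2.2]

private lemma g_bound_ordered {n f p d : ℕ} (hd : 1 ≤ d) {μ ν : Xf n f} {σ s : WfG n f}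
    (hμ : deep p d μ) (h0 : deep p 0 (conjX p ν σ s (μ + etaf n f) - etaf n f))
    {j : Fin f} {x y : Fin n} (hσ : σ j x < σ j y) :
    ((p : ℤ) * gfun ν σ j x y
        - gfun ν σ ((finRotate f)⁻¹ j) ((s j)⁻¹ x) ((s j)⁻¹ y) ≤ (p : ℤ) - d - 1) ∧
    (-((p : ℤ) - d - 1) ≤ (p : ℤ) * gfun ν σ j x y
        - gfun ν σ ((finRotate f)⁻¹ j) ((s j)⁻¹ x) ((s j)⁻¹ y)) := by
  have hxy : x ≠ y := fun hc => (ne_of_lt hσ) (by rw [hc])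
  obtain ⟨h1, h2⟩ := h0 j (σ j x) (σ j y) hσ
  rw [prZ_conj] at h1 h2
  simp only [perm_inv_apply_self', Nat.cast_zero, sub_zero] at h1 h2
  have e1 : ν j (σ j x) - ν j (σ j y)
      = gfun ν σ j x y + (if y < x then 1 else 0) := by
    simp only [gfun, if_neg (not_lt.mpr hσ.le)]; ring
  have e2 : ν ((finRotate f)⁻¹ j) (σ ((finRotate f)⁻¹ j) ((s j)⁻¹ x))
        - ν ((finRotate f)⁻¹ j) (σ ((finRotate f)⁻¹ j) ((s j)⁻¹ y))
      = gfun ν σ ((finRotate f)⁻¹ j) ((s j)⁻¹ x) ((s j)⁻¹ y)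
        + (if (s j)⁻¹ y < (s j)⁻¹ x then 1 else 0)
        - (if σ ((finRotate f)⁻¹ j) ((s j)⁻¹ y) < σ ((finRotate f)⁻¹ j) ((s j)⁻¹ x)
            then 1 else 0) := by
    simp only [gfun]; ring
  rw [e1, e2] at h1 h2
  have hβ : ((d : ℤ) + 1 ≤ prZ μ j x y + (p : ℤ) * (if y < x then 1 else 0)) ∧
      (prZ μ j x y + (p : ℤ) * (if y < x then 1 else 0) ≤ (p : ℤ) - d - 1) := by
    rcases lt_or_gt_of_ne hxy with h4 | h4
    · obtain ⟨hl, hr⟩ := hμ j x y h4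
      rw [if_neg (not_lt.mpr h4.le), mul_zero]
      constructor <;> linarith
    · obtain ⟨hl, hr⟩ := hμ j y x h4
      rw [if_pos h4, mul_one, prZ_anti' μ j y x]
      constructor <;> linarith
  have i1 : (0:ℤ) ≤ (if (s j)⁻¹ y < (s j)⁻¹ x then (1:ℤ) else 0) ∧
      (if (s j)⁻¹ y < (s j)⁻¹ x then (1:ℤ) else 0) ≤ 1 := by split_ifs <;> norm_num
  have i2 : (0:ℤ) ≤ (if σ ((finRotate f)⁻¹ j) ((s j)⁻¹ y)
        < σ ((finRotate f)⁻¹ j) ((s j)⁻¹ x) then (1:ℤ) else 0) ∧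
      (if σ ((finRotate f)⁻¹ j) ((s j)⁻¹ y)
        < σ ((finRotate f)⁻¹ j) ((s j)⁻¹ x) then (1:ℤ) else 0) ≤ 1 := by
    split_ifs <;> norm_num
  constructor <;> nlinarith [h1, h2, hβ.1, hβ.2, i1.1, i1.2, i2.1, i2.2]

private lemma g_bound {n f p d : ℕ} (hd : 1 ≤ d) {μ ν : Xf n f} {σ s : WfG n f}
    (hμ : deep p d μ) (h0 : deep p 0 (conjX p ν σ s (μ + etaf n f) - etaf n f))
    {j : Fin f} {x y : Fin n} (hxy : x ≠ y) :
    (p : ℤ) * gfun ν σ j x y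
        - gfun ν σ ((finRotate f)⁻¹ j) ((s j)⁻¹ x) ((s j)⁻¹ y) ≤ (p : ℤ) - d - 1 := by
  have hσ : σ j x ≠ σ j y := fun hc => hxy (Equiv.injective _ hc)
  have huv : (s j)⁻¹ x ≠ (s j)⁻¹ y := fun hc => hxy (Equiv.injective _ hc)
  rcases lt_or_gt_of_ne hσ with h | h
  · exact (g_bound_ordered hd hμ h0 h).1
  · have hb := (g_bound_ordered hd hμ h0 h).2
    rw [gfun_anti ν σ j hxy, gfun_anti ν σ _ huv] at hb
    linarith

lemma g_zero {n f p d : ℕ} (hn : 2 ≤ n) (hf : 1 ≤ f) (hnp : n < p) (hd : 1 ≤ d)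
    {μ ν : Xf n f} {σ s : WfG n f} (hμ : deep p d μ)
    (h0 : deep p 0 (conjX p ν σ s (μ + etaf n f) - etaf n f)) :
    ∀ (j : Fin f) (x y : Fin n), x ≠ y → gfun ν σ j x y = 0 := by
  classical
  have hdz : (1 : ℤ) ≤ (d : ℤ) := by exact_mod_cast hd
  have hpz : (3 : ℤ) ≤ (p : ℤ) := by exact_mod_cast (by omega : 3 ≤ p)
  set F : Fin f × Fin n × Fin n → ℤ := fun q => gfun ν σ q.1 q.2.1 q.2.2 with hF
  set T : Finset (Fin f × Fin n × Fin n) :=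
    Finset.univ.filter (fun q => q.2.1 ≠ q.2.2) with hT
  have hTne : T.Nonempty := by
    refine ⟨(⟨0, by omega⟩, ⟨0, by omega⟩, ⟨1, by omega⟩), ?_⟩
    simp only [hT, Finset.mem_filter, Finset.mem_univ, true_and]
    intro hc
    have := congrArg Fin.val hc
    simp at this
  obtain ⟨q, hq, hmax⟩ := T.exists_max_image F hTne
  have hqmem : q.2.1 ≠ q.2.2 := by
    simpa only [hT, Finset.mem_filter, Finset.mem_univ, true_and] using hq
  have hswap : (q.1, q.2.2, q.2.1) ∈ T := by
    simp only [hT, Finset.mem_filter, Finset.mem_univ, true_and]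
    exact hqmem.symm
  have hG0 : 0 ≤ F q := by
    have h1 := hmax _ hswap
    have ha := gfun_anti ν σ q.1 hqmem
    simp only [hF] at h1 ⊢
    linarith [h1, ha]
  have hb := g_bound (s := s) (j := q.1) hd hμ h0 hqmem
  have huv : ((s q.1)⁻¹ q.2.1) ≠ ((s q.1)⁻¹ q.2.2) := fun hc => hqmem (Equiv.injective _ hc)
  have hmem2 : (((finRotate f)⁻¹ q.1), ((s q.1)⁻¹ q.2.1), ((s q.1)⁻¹ q.2.2)) ∈ T := by
    simp only [hT, Finset.mem_filter, Finset.mem_univ, true_and]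
    exact huv
  have hle := hmax _ hmem2
  simp only [hF] at hle hb hG0 hmax
  have hGle : gfun ν σ q.1 q.2.1 q.2.2 ≤ 0 := by
    by_contra hc
    push_neg at hc
    have h1 : (1 : ℤ) ≤ gfun ν σ q.1 q.2.1 q.2.2 := hc
    have hprod : ((p : ℤ) - 1) * (gfun ν σ q.1 q.2.1 q.2.2 - 1) ≥ 0 :=
      mul_nonneg (by linarith) (by linarith)
    nlinarith [hb, hle, hprod]
  intro j x y hxy
  have hm1 : gfun ν σ j x y ≤ 0 := by
    have := hmax (j, x, y) (by
      simp only [hT, Finset.mem_filter, Finset.mem_univ, true_and]; exact hxy)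
    linarith
  have hm2 : gfun ν σ j y x ≤ 0 := by
    have := hmax (j, y, x) (by
      simp only [hT, Finset.mem_filter, Finset.mem_univ, true_and]; exact hxy.symm)
    linarith
  have := gfun_anti ν σ j hxy
  linarith


/-- let `μ` be d-deep in `C₀` (d ≥ 1) and `s ∈ Wf`. (i) If
`(s', μ' + η) = ^(ν,σ)(s, μ + η)` with `μ' ∈ C₀`, then `μ'` is (d−1)-deep and
`t_ν σ ∈ Ωf`. (ii) Conversely, if `t_ν σ ∈ Ωf` then the resulting `μ'` is
(d−1)-deep in `C₀`. -/
theorem statement5 (n f p d : ℕ) (hn : 2 ≤ n) (hf : 1 ≤ f) (hp : p.Prime) (hnp : n < p)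
    (hd : 1 ≤ d) (μ : Xf n f) (hμ : deep p d μ) (s : WfG n f) :
    (∀ (ν : Xf n f) (σ : WfG n f),
        deep p 0 (conjX p ν σ s (μ + etaf n f) - etaf n f) →
        deep p (d - 1) (conjX p ν σ s (μ + etaf n f) - etaf n f) ∧
          Wtf.mul (transl ν) (ofW σ) ∈ Omegaf n f p) ∧
    (∀ (ν : Xf n f) (σ : WfG n f),
        Wtf.mul (transl ν) (ofW σ) ∈ Omegaf n f p →
        deep p (d - 1) (conjX p ν σ s (μ + etaf n f) - etaf n f)) := by
  refine ⟨?_, ?_⟩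
  · intro ν σ h0
    have hg := g_zero hn hf hnp hd hμ h0
    exact ⟨deep_of_g hd s hμ hg, (mem_omega_iff' hnp ν σ).mpr (E_of_g hnp hg)⟩
  · intro ν σ hΩ
    exact deep_of_g hd s hμ (g_of_E hnp ((mem_omega_iff' hnp ν σ).mp hΩ))

end LLLSerre
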